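/- The function f(x) = 1/(π(1-x)√((1-2x)x)) for 0 < x < 1/2 (and 0 otherwise) is a probability density function, and if Y has density f then E[Y²] = 1 − 5/(4√2). -/

import Mathlib

open MeasureTheory Real

/-- The limit density of the M-coin walk with initial qubit `|1⟩^{⊗M}`:
`f(x) = 1/(π(1-x)√((1-2x)x))` on `(0, 1/2)`. -/
noncomputable def brunDensity (x : ℝ) : ℝ :=
  if 0 < x ∧ x < 1 / 2 then 1 / (Real.pi * (1 - x) * Real.sqrt ((1 - 2 * x) * x)) else 0

open Set Filter Topology


noncomputable def bdF (x : ℝ) : ℝ := 1 / (Real.pi * (1 - x) * Real.sqrt ((1 - 2 * x) * x))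

noncomputable def F1 (x : ℝ) : ℝ := 2 / Real.pi * Real.arctan (Real.sqrt (x / (1 - 2 * x)))

lemma hasDerivAt_F1 {x : ℝ} (hx : x ∈ Ioo (0:ℝ) (1/2)) : HasDerivAt F1 (bdF x) x := by
  obtain ⟨hx0, hx2⟩ := hx
  have h1 : (0:ℝ) < 1 - 2 * x := by linarith
  have hu : HasDerivAt (fun y : ℝ => y / (1 - 2 * y))
      ((1 * (1 - 2 * x) - x * (0 - 2 * 1)) / (1 - 2 * x) ^ 2) x := by
    exact (hasDerivAt_id x).div (((hasDerivAt_const x (1:ℝ)).sub ((hasDerivAt_id x).const_mul 2))) h1.ne'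
  have hus : x / (1 - 2 * x) ≠ 0 := by positivity
  have hs := hu.sqrt hus
  have ha := hs.arctan
  have := ha.const_mul (2 / Real.pi)
  convert this using 1
  · rfl
  · rfl
  · rfl
  have hsq : Real.sqrt (x / (1 - 2 * x)) = Real.sqrt x / Real.sqrt (1 - 2 * x) :=
    Real.sqrt_div hx0.le _
  have hmul : Real.sqrt ((1 - 2 * x) * x) = Real.sqrt (1 - 2 * x) * Real.sqrt x :=
    Real.sqrt_mul h1.le _
  set a := Real.sqrt x with haa
  set b := Real.sqrt (1 - 2 * x) with hbb
  have ha2 : a * a = x := Real.mul_self_sqrt hx0.le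
  have hb2 : b * b = 1 - 2 * x := Real.mul_self_sqrt h1.le
  have hapos : 0 < a := Real.sqrt_pos.mpr hx0
  have hbpos : 0 < b := Real.sqrt_pos.mpr h1
  have hxpos : (0:ℝ) < 1 - x := by linarith
  rw [bdF, hmul, hsq]
  have hpi := Real.pi_pos
  have h1x : (1 : ℝ) + (a / b) ^ 2 = (1 - x) / (b * b) := by
    field_simp
    nlinarith [ha2, hb2]
  rw [h1x]
  field_simp
  rw [eq_div_iff (pow_ne_zero 2 (by linarith : (1 - x * 2 : ℝ) ≠ 0))]
  linear_combination (-(b * b + (1 - 2*x))) * hb2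

/-- second antiderivative -/
noncomputable def G2 (x : ℝ) : ℝ :=
  F1 x + 1 / (2 * Real.pi) * Real.sqrt ((1 - 2 * x) * x)
    - 5 / (4 * Real.sqrt 2 * Real.pi) * Real.arcsin (4 * x - 1)

lemma hasDerivAt_G2 {x : ℝ} (hx : x ∈ Ioo (0:ℝ) (1/2)) :
    HasDerivAt G2 (x ^ 2 * bdF x) x := by
  obtain ⟨hx0, hx2⟩ := hx
  have h1 : (0:ℝ) < 1 - 2 * x := by linarith
  have hprod : (0:ℝ) < (1 - 2 * x) * x := by positivity
  have hA := hasDerivAt_F1 (x := x) ⟨hx0, hx2⟩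
  have hp : HasDerivAt (fun y : ℝ => (1 - 2 * y) * y)
      ((0 - 2 * 1) * x + (1 - 2 * x) * 1) x :=
    (((hasDerivAt_const x (1:ℝ)).sub ((hasDerivAt_id x).const_mul 2))).mul (hasDerivAt_id x)
  have hB := (hp.sqrt hprod.ne').const_mul (1 / (2 * Real.pi))
  have hin : HasDerivAt (fun y : ℝ => 4 * y - 1) 4 x := by
    simpa using ((hasDerivAt_id x).const_mul 4).sub_const 1
  have hne1 : 4 * x - 1 ≠ -1 := by intro h; nlinarith
  have hne2 : 4 * x - 1 ≠ 1 := by intro h; nlinarith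
  have hC0 := (Real.hasDerivAt_arcsin hne1 hne2).comp x hin
  have hC := hC0.const_mul (5 / (4 * Real.sqrt 2 * Real.pi))
  have hsum := (hA.add hB).sub hC
  convert hsum using 1
  · rfl
  · rfl
  · rfl
  have h8 : (1:ℝ) - (4 * x - 1) ^ 2 = 8 * ((1 - 2 * x) * x) := by ring
  have h8' : Real.sqrt (1 - (4 * x - 1) ^ 2)
      = 2 * Real.sqrt 2 * Real.sqrt ((1 - 2 * x) * x) := by
    rw [h8, show (8:ℝ) * ((1 - 2*x)*x) = (2*Real.sqrt 2)^2 * ((1-2*x)*x) by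
      rw [mul_pow]; rw [Real.sq_sqrt (by norm_num : (0:ℝ) ≤ 2)]; ring]
    rw [Real.sqrt_mul (by positivity) _, Real.sqrt_sq (by positivity)]
  rw [bdF, h8']
  set s := Real.sqrt ((1 - 2 * x) * x) with hss
  set t := Real.sqrt 2 with htt
  have hspos : 0 < s := Real.sqrt_pos.mpr hprod
  have ht2 : t * t = 2 := Real.mul_self_sqrt (by norm_num)
  have htpos : 0 < t := Real.sqrt_pos.mpr (by norm_num)
  have hxpos : (0:ℝ) < 1 - x := by linarith
  have hpi := Real.pi_pos
  field_simp
  linear_combination (-5 * (1 - x)) * ht2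

lemma my_tendsto_sqrt_atTop : Tendsto Real.sqrt atTop atTop := by
  apply Filter.tendsto_atTop_atTop.mpr
  intro b
  refine ⟨(max b 0)^2, fun a ha => ?_⟩
  calc b ≤ max b 0 := le_max_left _ _
  _ = Real.sqrt ((max b 0)^2) := (Real.sqrt_sq (le_max_right _ _)).symm
  _ ≤ Real.sqrt a := Real.sqrt_le_sqrt ha

lemma tendsto_F1_half : Tendsto F1 (𝓝[<] (1/2:ℝ)) (𝓝 1) := by
  have hd : Tendsto (fun y : ℝ => 1 - 2 * y) (𝓝[<] (1/2:ℝ)) (𝓝[>] 0) := by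
    apply tendsto_nhdsWithin_of_tendsto_nhds_of_eventually_within
    · have : Tendsto (fun y : ℝ => 1 - 2 * y) (𝓝 (1/2:ℝ)) (𝓝 (1 - 2 * (1/2))) :=
        (continuous_const.sub ((continuous_const.mul continuous_id : Continuous fun y : ℝ => 2 * y))).tendsto _
      norm_num at this
      exact this.mono_left nhdsWithin_le_nhds
    · filter_upwards [self_mem_nhdsWithin] with y hy
      simp only [mem_Iio] at hy
      simp only [mem_Ioi]
      linarith
  have hinv : Tendsto (fun y : ℝ => (1 - 2 * y)⁻¹) (𝓝[<] (1/2:ℝ)) atTop :=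
    hd.inv_tendsto_nhdsGT_zero
  have hid : Tendsto (fun y : ℝ => y) (𝓝[<] (1/2:ℝ)) (𝓝 (1/2)) :=
    tendsto_id.mono_left nhdsWithin_le_nhds
  have hquot : Tendsto (fun y : ℝ => y / (1 - 2 * y)) (𝓝[<] (1/2:ℝ)) atTop := by
    simp only [div_eq_mul_inv]
    exact hid.pos_mul_atTop (by norm_num) hinv
  have hsq : Tendsto (fun y : ℝ => Real.sqrt (y / (1 - 2 * y))) (𝓝[<] (1/2:ℝ)) atTop :=
    my_tendsto_sqrt_atTop.comp hquot
  have harc : Tendsto (fun y : ℝ => Real.arctan (Real.sqrt (y / (1 - 2 * y))))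
      (𝓝[<] (1/2:ℝ)) (𝓝 (Real.pi/2)) :=
    tendsto_nhds_of_tendsto_nhdsWithin (Real.tendsto_arctan_atTop.comp hsq)
  have := harc.const_mul (2 / Real.pi)
  have hval : 2 / Real.pi * (Real.pi / 2) = 1 := by
    field_simp
  rw [hval] at this
  exact this

lemma tendsto_F1_zero : Tendsto F1 (𝓝[>] (0:ℝ)) (𝓝 0) := by
  have hc : ContinuousAt F1 0 := by
    apply continuousAt_const.mul
    apply Real.continuous_arctan.continuousAt.comp
    apply ContinuousAt.sqrt
    exact continuousAt_id.div (by fun_prop) (by norm_num)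
  have : F1 0 = 0 := by simp [F1]
  have h := hc.tendsto.mono_left (nhdsWithin_le_nhds (s := Ioi (0:ℝ)))
  rwa [this] at h

lemma tendsto_rest : ∀ c : ℝ, ContinuousAt (fun x : ℝ =>
    1 / (2 * Real.pi) * Real.sqrt ((1 - 2 * x) * x)
      - 5 / (4 * Real.sqrt 2 * Real.pi) * Real.arcsin (4 * x - 1)) c := by
  intro c
  apply ContinuousAt.sub
  · exact continuousAt_const.mul ((by fun_prop : Continuous fun x : ℝ => (1-2*x)*x).continuousAt.sqrt)
  · exact continuousAt_const.mul (Real.continuous_arcsin.continuousAt.comp (by fun_prop))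

lemma tendsto_G2_zero :
    Tendsto G2 (𝓝[>] (0:ℝ)) (𝓝 (5 / (8 * Real.sqrt 2))) := by
  have h2 := ((tendsto_rest 0).tendsto.mono_left (nhdsWithin_le_nhds (s := Ioi (0:ℝ))))
  have := tendsto_F1_zero.add h2
  have hval : (0:ℝ) + (1 / (2 * Real.pi) * Real.sqrt ((1 - 2 * 0) * 0)
      - 5 / (4 * Real.sqrt 2 * Real.pi) * Real.arcsin (4 * 0 - 1)) = 5 / (8 * Real.sqrt 2) := by
    norm_num [Real.arcsin_neg_one]
    have h2 : Real.sqrt 2 ≠ 0 := by positivity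
    field_simp
    ring
  rw [hval] at this
  convert this using 2 with x
  simp [G2, sub_eq_add_neg, add_assoc]

lemma tendsto_G2_half :
    Tendsto G2 (𝓝[<] ((1:ℝ)/2)) (𝓝 (1 - 5 / (8 * Real.sqrt 2))) := by
  have h2 := ((tendsto_rest (1/2)).tendsto.mono_left (nhdsWithin_le_nhds (s := Iio ((1:ℝ)/2))))
  have := tendsto_F1_half.add h2
  have hval : (1:ℝ) + (1 / (2 * Real.pi) * Real.sqrt ((1 - 2 * (1/2)) * (1/2))
      - 5 / (4 * Real.sqrt 2 * Real.pi) * Real.arcsin (4 * (1/2) - 1)) = 1 - 5 / (8 * Real.sqrt 2) := by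
    norm_num [Real.arcsin_one]
    have h2 : Real.sqrt 2 ≠ 0 := by positivity
    field_simp
    ring
  rw [hval] at this
  convert this using 2 with x
  simp [G2, sub_eq_add_neg, add_assoc]

lemma bdF_nonneg_on {x : ℝ} (hx : x ∈ Ioo (0:ℝ) (1/2)) : 0 ≤ bdF x := by
  obtain ⟨hx0, hx2⟩ := hx
  apply div_nonneg zero_le_one
  apply mul_nonneg (mul_nonneg Real.pi_pos.le (by linarith)) (Real.sqrt_nonneg _)

lemma integrableOn_bdF : IntegrableOn bdF (Ioc (0:ℝ) (1/2)) := by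
  have hA : IntegrableOn bdF (Ioc (0:ℝ) (1/4)) := by
    apply intervalIntegral.integrableOn_deriv_of_nonneg (g := F1)
    · apply continuousOn_const.mul
      apply Real.continuous_arctan.comp_continuousOn
      apply ContinuousOn.sqrt
      apply ContinuousOn.div continuousOn_id (by fun_prop)
      intro x hx
      simp only [mem_Icc] at hx
      intro h; linarith [hx.2]
    · intro x hx
      exact hasDerivAt_F1 ⟨hx.1, by simp only [mem_Ioo] at hx; linarith [hx.2]⟩
    · intro x hx
      exact bdF_nonneg_on ⟨hx.1, by simp only [mem_Ioo] at hx; linarith [hx.2]⟩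
  have hB : IntegrableOn bdF (Ioc ((1:ℝ)/4) (1/2)) := by
    apply intervalIntegral.integrableOn_deriv_of_nonneg
      (g := fun y => 1 - 2 / Real.pi * Real.arctan (Real.sqrt ((1 - 2 * y) / y)))
    · apply continuousOn_const.sub
      apply continuousOn_const.mul
      apply Real.continuous_arctan.comp_continuousOn
      apply ContinuousOn.sqrt
      apply ContinuousOn.div (by fun_prop) continuousOn_id
      intro x hx
      simp only [mem_Icc] at hx
      intro h; simp only [id_eq] at h; rw [h] at hx; norm_num at hx
    · intro x hx
      simp only [mem_Ioo] at hx
      have hx' : x ∈ Ioo (0:ℝ) (1/2) := ⟨by linarith [hx.1], hx.2⟩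
      apply (hasDerivAt_F1 hx').congr_of_eventuallyEq
      filter_upwards [Ioo_mem_nhds hx'.1 hx'.2] with y hy
      obtain ⟨hy0, hy2⟩ := hy
      have h1 : (0:ℝ) < 1 - 2 * y := by linarith
      have hr : 0 < Real.sqrt (y / (1 - 2 * y)) := Real.sqrt_pos.mpr (by positivity)
      have hinv : (1 - 2 * y) / y = (y / (1 - 2 * y))⁻¹ := (inv_div _ _).symm
      rw [hinv, Real.sqrt_inv, Real.arctan_inv_of_pos hr, F1]
      field_simp
      ring
    · intro x hx
      simp only [mem_Ioo] at hx
      exact bdF_nonneg_on ⟨by linarith [hx.1], hx.2⟩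
  have := hA.union hB
  rwa [Ioc_union_Ioc_eq_Ioc (by norm_num) (by norm_num)] at this

lemma measurable_bdF : Measurable bdF := by
  unfold bdF
  fun_prop

lemma integrableOn_sq_bdF : IntegrableOn (fun x => x ^ 2 * bdF x) (Ioc (0:ℝ) (1/2)) := by
  apply Integrable.mono integrableOn_bdF
  · exact ((measurable_id.pow_const 2).mul measurable_bdF).aestronglyMeasurable
  · rw [ae_restrict_iff' measurableSet_Ioc]
    filter_upwards with x hx
    obtain ⟨hx0, hx2⟩ := hx
    rw [Real.norm_eq_abs, Real.norm_eq_abs, abs_mul]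
    have h1 : |x ^ 2| ≤ 1 := by rw [abs_of_nonneg (by positivity)]; nlinarith
    calc |x ^ 2| * |bdF x| ≤ 1 * |bdF x| := by
          apply mul_le_mul_of_nonneg_right h1 (abs_nonneg _)
      _ = |bdF x| := one_mul _

theorem brunDensity_prob_and_second_moment :
    (∫ x : ℝ, brunDensity x = 1) ∧
    (∫ x : ℝ, x ^ 2 * brunDensity x = 1 - 5 / (4 * Real.sqrt 2)) := by
  have hind : brunDensity = (Ioo (0:ℝ) (1/2)).indicator bdF := by
    funext x
    simp [brunDensity, bdF, Set.indicator_apply, mem_Ioo]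
  have hint : IntervalIntegrable bdF volume 0 (1/2) :=
    (intervalIntegrable_iff_integrableOn_Ioc_of_le (by norm_num)).mpr integrableOn_bdF
  have hint2 : IntervalIntegrable (fun x => x ^ 2 * bdF x) volume 0 (1/2) :=
    (intervalIntegrable_iff_integrableOn_Ioc_of_le (by norm_num)).mpr integrableOn_sq_bdF
  constructor
  · calc ∫ x : ℝ, brunDensity x = ∫ x in Ioo (0:ℝ) (1/2), bdF x := by
          rw [hind, integral_indicator measurableSet_Ioo]
      _ = ∫ x in (0:ℝ)..(1/2), bdF x := by
          rw [intervalIntegral.integral_of_le (by norm_num), integral_Ioc_eq_integral_Ioo]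
      _ = 1 - 0 := intervalIntegral.integral_eq_sub_of_hasDerivAt_of_tendsto (by norm_num)
            (fun x hx => hasDerivAt_F1 hx) hint tendsto_F1_zero tendsto_F1_half
      _ = 1 := by ring
  · have hind2 : (fun x : ℝ => x ^ 2 * brunDensity x)
        = (Ioo (0:ℝ) (1/2)).indicator (fun x => x ^ 2 * bdF x) := by
      funext x
      rw [hind]
      by_cases h : x ∈ Ioo (0:ℝ) (1/2) <;> simp [Set.indicator_apply, h]
    calc ∫ x : ℝ, x ^ 2 * brunDensity x = ∫ x in Ioo (0:ℝ) (1/2), x ^ 2 * bdF x := by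
          rw [hind2, integral_indicator measurableSet_Ioo]
      _ = ∫ x in (0:ℝ)..(1/2), x ^ 2 * bdF x := by
          rw [intervalIntegral.integral_of_le (by norm_num), integral_Ioc_eq_integral_Ioo]
      _ = (1 - 5 / (8 * Real.sqrt 2)) - 5 / (8 * Real.sqrt 2) :=
          intervalIntegral.integral_eq_sub_of_hasDerivAt_of_tendsto (by norm_num)
            (fun x hx => hasDerivAt_G2 hx) hint2 tendsto_G2_zero tendsto_G2_half
      _ = 1 - 5 / (4 * Real.sqrt 2) := by ring
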